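/- Let H be an n×n unitary Hessenberg matrix (H i j = 0 for i ≥ j+2, H unitary) with all subdiagonal entries H(k+1,k) nonzero. Then there exist Givens transformations G₀, ..., G_{n−2}, each equal to the identity except for a 2×2 unitary block in rows and columns {k, k+1}, such that H = G₀·G₁·⋯·G_{n−2}. -/

import Mathlib

open Matrix

def IsGivens {n : ℕ} (k : ℕ) (G : Matrix (Fin n) (Fin n) ℂ) : Prop :=
  G ∈ Matrix.unitaryGroup (Fin n) ℂ ∧
    ∀ i j : Fin n, (i.val ≠ k ∧ i.val ≠ k + 1) ∨ (j.val ≠ k ∧ j.val ≠ k + 1) →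
      G i j = if i = j then 1 else 0

namespace Stmt12Aux

variable {n : ℕ}

/-- embed `A` as `1 ⊕ A`. -/
def emb (A : Matrix (Fin n) (Fin n) ℂ) : Matrix (Fin (n+1)) (Fin (n+1)) ℂ :=
  Matrix.of fun i j =>
    Fin.cases (Fin.cases 1 (fun _ => 0) j) (fun i' => Fin.cases 0 (fun j' => A i' j') j) i

@[simp] lemma emb_zz (A : Matrix (Fin n) (Fin n) ℂ) : emb A 0 0 = 1 := by simp [emb]
@[simp] lemma emb_zs (A : Matrix (Fin n) (Fin n) ℂ) (j : Fin n) : emb A 0 j.succ = 0 := by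
  simp [emb]
@[simp] lemma emb_sz (A : Matrix (Fin n) (Fin n) ℂ) (i : Fin n) : emb A i.succ 0 = 0 := by
  simp [emb]
@[simp] lemma emb_ss (A : Matrix (Fin n) (Fin n) ℂ) (i j : Fin n) :
    emb A i.succ j.succ = A i j := by simp [emb]

lemma emb_one : emb (1 : Matrix (Fin n) (Fin n) ℂ) = 1 := by
  ext i j
  induction i using Fin.cases <;> induction j using Fin.cases <;>
    simp [Matrix.one_apply, Fin.succ_ne_zero, (Fin.succ_ne_zero _).symm, Fin.succ_inj]

lemma emb_mul (A B : Matrix (Fin n) (Fin n) ℂ) : emb (A * B) = emb A * emb B := by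
  ext i j
  induction i using Fin.cases <;> induction j using Fin.cases <;>
    simp [Matrix.mul_apply, Fin.sum_univ_succ]

lemma emb_star (A : Matrix (Fin n) (Fin n) ℂ) : (emb A)ᴴ = emb Aᴴ := by
  ext i j
  induction i using Fin.cases <;> induction j using Fin.cases <;>
    simp [Matrix.conjTranspose_apply]

lemma emb_inj {A B : Matrix (Fin n) (Fin n) ℂ} (h : emb A = emb B) : A = B := by
  ext i j
  have := congrFun (congrFun h i.succ) j.succ
  simpa using this

lemma emb_prod (L : List (Matrix (Fin n) (Fin n) ℂ)) :
    (L.map emb).prod = emb L.prod := by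
  induction L with
  | nil => simp [emb_one]
  | cons a l ih => simp [ih, emb_mul]

lemma emb_givens {k : ℕ} {A : Matrix (Fin n) (Fin n) ℂ} (h : IsGivens k A) :
    IsGivens (k+1) (emb A) := by
  constructor
  · rw [Matrix.mem_unitaryGroup_iff, Matrix.star_eq_conjTranspose, emb_star, ← emb_mul]
    have := h.1
    rw [Matrix.mem_unitaryGroup_iff, Matrix.star_eq_conjTranspose] at this
    rw [this, emb_one]
  · intro i j hij
    induction i using Fin.cases with
    | zero =>
      induction j using Fin.cases with
      | zero => simp
      | succ j' => simp [(Fin.succ_ne_zero j').symm]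
    | succ i' =>
      induction j using Fin.cases with
      | zero => simp [Fin.succ_ne_zero i']
      | succ j' =>
        rw [emb_ss]
        have h2 : (i'.val ≠ k ∧ i'.val ≠ k + 1) ∨ (j'.val ≠ k ∧ j'.val ≠ k + 1) := by
          rcases hij with ⟨h1, h2⟩ | ⟨h1, h2⟩
          · left; constructor <;> simp [Fin.val_succ] at h1 h2 ⊢ <;> omega
          · right; constructor <;> simp [Fin.val_succ] at h1 h2 ⊢ <;> omega
        rw [h.2 i' j' h2]
        simp [Fin.succ_inj]

/-- Givens block at the top-left. -/
def g2 (a b : ℂ) : Matrix (Fin (n+2)) (Fin (n+2)) ℂ :=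
  Matrix.of fun i j =>
    if i.val = 0 then (if j.val = 0 then a else if j.val = 1 then -(starRingEnd ℂ) b else 0)
    else if i.val = 1 then (if j.val = 0 then b else if j.val = 1 then (starRingEnd ℂ) a else 0)
    else if i = j then 1 else 0

@[simp] lemma g2_zz (a b : ℂ) : (g2 a b : Matrix (Fin (n+2)) (Fin (n+2)) ℂ) 0 0 = a := by
  simp [g2]
@[simp] lemma g2_zo (a b : ℂ) :
    (g2 a b : Matrix (Fin (n+2)) (Fin (n+2)) ℂ) 0 1 = -(starRingEnd ℂ) b := by
  simp [g2]
@[simp] lemma g2_zss (a b : ℂ) (j : Fin n) :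
    (g2 a b : Matrix (Fin (n+2)) (Fin (n+2)) ℂ) 0 j.succ.succ = 0 := by
  simp [g2]
@[simp] lemma g2_oz (a b : ℂ) :
    (g2 a b : Matrix (Fin (n+2)) (Fin (n+2)) ℂ) 1 0 = b := by
  simp [g2]
@[simp] lemma g2_oo (a b : ℂ) :
    (g2 a b : Matrix (Fin (n+2)) (Fin (n+2)) ℂ) 1 1 = (starRingEnd ℂ) a := by
  simp [g2]
@[simp] lemma g2_oss (a b : ℂ) (j : Fin n) :
    (g2 a b : Matrix (Fin (n+2)) (Fin (n+2)) ℂ) 1 j.succ.succ = 0 := by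
  simp [g2]
@[simp] lemma g2_ssz (a b : ℂ) (i : Fin n) :
    (g2 a b : Matrix (Fin (n+2)) (Fin (n+2)) ℂ) i.succ.succ 0 = 0 := by
  simp [g2, Fin.succ_ne_zero]
@[simp] lemma g2_sso (a b : ℂ) (i : Fin n) :
    (g2 a b : Matrix (Fin (n+2)) (Fin (n+2)) ℂ) i.succ.succ 1 = 0 := by
  have : i.succ.succ ≠ (1 : Fin (n+2)) := by
    simp [Fin.ext_iff]
  simp [g2, this]
@[simp] lemma g2_ssss (a b : ℂ) (i j : Fin n) :
    (g2 a b : Matrix (Fin (n+2)) (Fin (n+2)) ℂ) i.succ.succ j.succ.succ =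
      if i = j then 1 else 0 := by
  simp [g2, Fin.succ_inj]

lemma g2_mul_star {a b : ℂ} (hab : a * (starRingEnd ℂ) a + b * (starRingEnd ℂ) b = 1) :
    (g2 a b : Matrix (Fin (n+2)) (Fin (n+2)) ℂ) * (g2 a b)ᴴ = 1 := by
  ext i j
  rw [Matrix.mul_apply]
  simp only [Matrix.conjTranspose_apply, Fin.sum_univ_succ]
  induction i using Fin.cases with
  | zero =>
    induction j using Fin.cases with
    | zero =>
      simp [Matrix.one_apply]
      linear_combination hab
    | succ j' =>
      induction j' using Fin.cases with
      | zero =>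
        simp [Matrix.one_apply, (Fin.succ_ne_zero (0 : Fin (n+1))).symm]
        ring
      | succ j'' =>
        simp [Matrix.one_apply, (Fin.succ_ne_zero _).symm]
  | succ i' =>
    induction i' using Fin.cases with
    | zero =>
      induction j using Fin.cases with
      | zero =>
        simp [Matrix.one_apply, Fin.succ_ne_zero]
        ring
      | succ j' =>
        induction j' using Fin.cases with
        | zero =>
          simp [Matrix.one_apply]
          linear_combination hab
        | succ j'' =>
          have : (1 : Fin (n+2)) ≠ j''.succ.succ := by simp [Fin.ext_iff]
          simp [Matrix.one_apply, this]
    | succ i'' =>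
      induction j using Fin.cases with
      | zero =>
        simp [Matrix.one_apply, Fin.succ_ne_zero]
      | succ j' =>
        induction j' using Fin.cases with
        | zero =>
          have : i''.succ.succ ≠ (1 : Fin (n+2)) := by simp [Fin.ext_iff]
          simp [Matrix.one_apply, this]
        | succ j'' =>
          simp [Matrix.one_apply, Fin.succ_inj, ite_mul, mul_ite, apply_ite (starRingEnd ℂ),
            Finset.sum_ite_eq, Finset.sum_ite_eq']

lemma g2_star_mul {a b : ℂ} (hab : a * (starRingEnd ℂ) a + b * (starRingEnd ℂ) b = 1) :
    (g2 a b : Matrix (Fin (n+2)) (Fin (n+2)) ℂ)ᴴ * g2 a b = 1 := by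
  rw [← Matrix.star_eq_conjTranspose, ← mul_eq_one_comm, Matrix.star_eq_conjTranspose]
  exact g2_mul_star hab

lemma g2_givens {a b : ℂ} (hab : a * (starRingEnd ℂ) a + b * (starRingEnd ℂ) b = 1) :
    IsGivens 0 (g2 a b : Matrix (Fin (n+2)) (Fin (n+2)) ℂ) := by
  constructor
  · rw [Matrix.mem_unitaryGroup_iff, Matrix.star_eq_conjTranspose]
    exact g2_mul_star hab
  · intro i j hij
    rcases hij with ⟨h1, h2⟩ | ⟨h1, h2⟩
    · have hi2 : i.val ≠ 0 ∧ i.val ≠ 1 := ⟨h1, by omega⟩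
      by_cases hij : i = j
      · subst hij; simp [g2, hi2.1, hi2.2, -Fin.val_eq_zero_iff]
      · simp [g2, hi2.1, hi2.2, hij, -Fin.val_eq_zero_iff]
    · have hj2 : j.val ≠ 0 ∧ j.val ≠ 1 := ⟨h1, h2⟩
      by_cases hi0 : i.val = 0
      · have : i ≠ j := fun h => hj2.1 (h ▸ hi0)
        simp [g2, hi0, hj2.1, hj2.2, this, -Fin.val_eq_zero_iff]
      · by_cases hi1 : i.val = 1
        · have : i ≠ j := fun h => hj2.2 (h ▸ hi1)
          simp [g2, hi0, hi1, hj2.1, hj2.2, this, -Fin.val_eq_zero_iff]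
        · simp [g2, hi0, hi1, -Fin.val_eq_zero_iff]

lemma emb_of (M : Matrix (Fin (n+1)) (Fin (n+1)) ℂ) (h00 : M 0 0 = 1)
    (h0s : ∀ j : Fin n, M 0 j.succ = 0) (hs0 : ∀ i : Fin n, M i.succ 0 = 0) :
    M = emb (M.submatrix Fin.succ Fin.succ) := by
  ext i j
  induction i using Fin.cases <;> induction j using Fin.cases <;>
    simp [h00, h0s, hs0]

theorem aux : ∀ (n : ℕ) (H : Matrix (Fin (n+2)) (Fin (n+2)) ℂ),
    Hᴴ * H = 1 →
    (∀ i j : Fin (n+2), j.val + 2 ≤ i.val → H i j = 0) →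
    (∀ i j : Fin (n+2), i.val = j.val + 1 → H i j ≠ 0) →
    ∃ G : Fin (n+1) → Matrix (Fin (n+2)) (Fin (n+2)) ℂ,
      (∀ k : Fin (n+1), IsGivens k.val (G k)) ∧ H = (List.ofFn G).prod := by
  intro n
  induction n with
  | zero =>
    intro H hU hHess hsub
    refine ⟨fun _ => H, ?_, ?_⟩
    · intro k
      constructor
      · rw [Matrix.mem_unitaryGroup_iff', Matrix.star_eq_conjTranspose]
        exact hU
      · intro i j hij
        have hk : k.val = 0 := by omega
        have hi := i.isLt
        have hj := j.isLt
        rcases hij with ⟨h1, h2⟩ | ⟨h1, h2⟩ <;> omega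
    · simp
  | succ n ih =>
    intro H hU hHess hsub
    set a := H 0 0 with ha
    set b := H 1 0 with hb
    have hz : ∀ k : Fin (n+1), H k.succ.succ 0 = 0 := fun k => hHess _ _ (by simp)
    have hab : a * (starRingEnd ℂ) a + b * (starRingEnd ℂ) b = 1 := by
      have h1 := congrFun (congrFun hU 0) 0
      rw [Matrix.mul_apply, Fin.sum_univ_succ, Fin.sum_univ_succ] at h1
      simp only [Matrix.conjTranspose_apply, Matrix.one_apply_eq,
        Fin.succ_zero_eq_one, Complex.star_def] at h1
      simp only [hz, mul_zero, map_zero, zero_mul, Finset.sum_const_zero, add_zero] at h1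
      linear_combination h1
    set Gz : Matrix (Fin (n+3)) (Fin (n+3)) ℂ := g2 a b with hGz
    have hGmul : Gz * Gzᴴ = 1 := g2_mul_star hab
    have hGmul' : Gzᴴ * Gz = 1 := g2_star_mul hab
    set M : Matrix (Fin (n+3)) (Fin (n+3)) ℂ := Gzᴴ * H with hMdef
    have hM00 : M 0 0 = 1 := by
      rw [hMdef, Matrix.mul_apply, Fin.sum_univ_succ, Fin.sum_univ_succ]
      simp only [Matrix.conjTranspose_apply, Fin.succ_zero_eq_one,
        Complex.star_def]
      simp only [hGz, g2_zz, g2_oz, g2_ssz, map_zero, zero_mul, Finset.sum_const_zero,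
        add_zero, ← ha, ← hb]
      linear_combination hab
    have hMs0 : ∀ i : Fin (n+2), M i.succ 0 = 0 := by
      intro i
      induction i using Fin.cases with
      | zero =>
        rw [hMdef, Matrix.mul_apply, Fin.sum_univ_succ, Fin.sum_univ_succ]
        simp only [Matrix.conjTranspose_apply, Fin.succ_zero_eq_one,
          Complex.star_def]
        simp only [hGz, g2_zo, g2_oo, g2_sso, map_zero, zero_mul, Finset.sum_const_zero,
          add_zero, map_neg, Complex.conj_conj, ← ha, ← hb]
        ring
      | succ i' =>
        rw [hMdef, Matrix.mul_apply, Fin.sum_univ_succ, Fin.sum_univ_succ]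
        simp only [Matrix.conjTranspose_apply, Fin.succ_zero_eq_one, Complex.star_def]
        simp [hGz, hz]
    have hMunit : Mᴴ * M = 1 := by
      rw [hMdef, Matrix.conjTranspose_mul, Matrix.conjTranspose_conjTranspose]
      calc Hᴴ * Gz * (Gzᴴ * H) = Hᴴ * (Gz * Gzᴴ) * H := by
            rw [Matrix.mul_assoc, Matrix.mul_assoc, Matrix.mul_assoc]
        _ = Hᴴ * H := by rw [hGmul, Matrix.mul_one]
        _ = 1 := hU
    have hMunit' : M * Mᴴ = 1 := by
      rw [← Matrix.star_eq_conjTranspose] at hMunit ⊢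
      exact mul_eq_one_comm.mp hMunit
    have hM0s : ∀ j : Fin (n+2), M 0 j.succ = 0 := by
      have h2 := congrFun (congrFun hMunit' (0 : Fin (n+3))) 0
      rw [Matrix.mul_apply] at h2
      simp only [Matrix.conjTranspose_apply, Matrix.one_apply_eq, Complex.star_def,
        Complex.mul_conj] at h2
      rw [Fin.sum_univ_succ] at h2
      simp only [hM00, Complex.normSq_one, Complex.ofReal_one] at h2
      have h3 : (∑ j : Fin (n+2), (Complex.normSq (M 0 j.succ) : ℂ)) = 0 := by
        linear_combination h2
      rw [← Complex.ofReal_sum] at h3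
      have h4 := Complex.ofReal_eq_zero.mp h3
      have h5 := (Finset.sum_eq_zero_iff_of_nonneg
        (fun j _ => Complex.normSq_nonneg (M 0 j.succ))).mp h4
      intro j
      exact Complex.normSq_eq_zero.mp (h5 j (Finset.mem_univ j))
    have hMemb : M = emb (M.submatrix Fin.succ Fin.succ) := emb_of M hM00 hM0s hMs0
    set H1 : Matrix (Fin (n+2)) (Fin (n+2)) ℂ := M.submatrix Fin.succ Fin.succ with hH1def
    have hH1U : H1ᴴ * H1 = 1 := by
      apply emb_inj
      rw [emb_mul, ← emb_star, ← hMemb, hMunit, emb_one]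
    have hrow : ∀ (i : Fin (n+1)) (c : Fin (n+3)), M i.succ.succ c = H i.succ.succ c := by
      intro i c
      rw [hMdef, Matrix.mul_apply, Fin.sum_univ_succ, Fin.sum_univ_succ]
      simp only [Matrix.conjTranspose_apply, Fin.succ_zero_eq_one, Complex.star_def]
      simp [hGz, apply_ite (starRingEnd ℂ), ite_mul, Finset.sum_ite_eq]
    have hH1Hess : ∀ i j : Fin (n+2), j.val + 2 ≤ i.val → H1 i j = 0 := by
      intro i j hij
      have hi0 : i ≠ 0 := by
        intro h; rw [h] at hij; simp at hij
      obtain ⟨i'', rfl⟩ := Fin.eq_succ_of_ne_zero hi0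
      show M i''.succ.succ j.succ = 0
      rw [hrow]
      exact hHess _ _ (by simp [Fin.val_succ] at hij ⊢; omega)
    have hH1sub : ∀ i j : Fin (n+2), i.val = j.val + 1 → H1 i j ≠ 0 := by
      intro i j hij
      have hi0 : i ≠ 0 := by
        intro h; rw [h] at hij; simp at hij
      obtain ⟨i'', rfl⟩ := Fin.eq_succ_of_ne_zero hi0
      show M i''.succ.succ j.succ ≠ 0
      rw [hrow]
      exact hsub _ _ (by simp [Fin.val_succ] at hij ⊢; omega)
    obtain ⟨G', hG'giv, hG'prod⟩ := ih H1 hH1U hH1Hess hH1sub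
    refine ⟨Fin.cases Gz (fun k => emb (G' k)), ?_, ?_⟩
    · intro k
      induction k using Fin.cases with
      | zero => simpa using g2_givens hab
      | succ k' => simpa using emb_givens (hG'giv k')
    · rw [List.ofFn_succ]
      simp only [Fin.cases_zero, Fin.cases_succ]
      rw [List.prod_cons]
      have hmap : (List.ofFn fun i : Fin (n+1) => emb (G' i)) = (List.ofFn G').map emb := by
        rw [List.map_ofFn]
        rfl
      rw [hmap, emb_prod, ← hG'prod, ← hMemb, hMdef, ← Matrix.mul_assoc, hGmul, Matrix.one_mul]

end Stmt12Aux

theorem stmt12 (n : ℕ) (hn : 2 ≤ n) (H : Matrix (Fin n) (Fin n) ℂ)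
    (hU : Hᴴ * H = 1)
    (hHess : ∀ i j : Fin n, j.val + 2 ≤ i.val → H i j = 0)
    (hsub : ∀ i j : Fin n, i.val = j.val + 1 → H i j ≠ 0) :
    ∃ G : Fin (n - 1) → Matrix (Fin n) (Fin n) ℂ,
      (∀ k : Fin (n - 1), IsGivens k.val (G k)) ∧ H = (List.ofFn G).prod := by
  obtain ⟨m, rfl⟩ : ∃ m, n = m + 2 := ⟨n - 2, by omega⟩
  exact Stmt12Aux.aux m H hU hHess hsub
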